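/- Let H ≤ G × G be a subspace with Goursat data E_X = {x | ∃ z, (x,z) ∈ H}, E_Z = {z | ∃ x, (x,z) ∈ H}, N_X = {x | (x,0) ∈ H}, N_Z = {z | (0,z) ∈ H}. Then the following are equivalent: (1) H + H^ω is a direct product of two subspaces of G; (2) H ∩ H^ω is a direct product of two subspaces of G; (3) H + H^ω = (E_X + N_Z^θ) × (E_Z + N_X^θ); (4) H ∩ H^ω = (N_X ∩ E_Z^θ) × (N_Z ∩ E_X^θ). -/

import Mathlib

open Finset

/-- Orthogonal complement of a submodule with respect to a bilinear form:
`ortho ξ H = {v | ξ(v,h) = 0 for all h ∈ H}`. -/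
def ortho {K V : Type*} [CommSemiring K] [AddCommMonoid V] [Module K V]
    (ξ : V →ₗ[K] V →ₗ[K] K) (H : Submodule K V) : Submodule K V :=
  ⨅ h ∈ H, LinearMap.ker (ξ.flip h)

/-- The dot product `θ(a,b) = ∑ j, a j * b j` as a bilinear form on `Fin n → ZMod p`. -/
def dotB (p n : ℕ) : (Fin n → ZMod p) →ₗ[ZMod p] (Fin n → ZMod p) →ₗ[ZMod p] ZMod p :=
  LinearMap.mk₂ (ZMod p) (fun a b => ∑ j, a j * b j)
    (fun a a' b => by simp [add_mul, Finset.sum_add_distrib])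
    (fun c a b => by simp [Finset.mul_sum, mul_assoc])
    (fun a b b' => by simp [mul_add, Finset.sum_add_distrib])
    (fun c a b => by simp [Finset.mul_sum, mul_left_comm])

/-- The symmetric form on `V × V` induced by a bilinear form `B` on `V`:
`(v,w) ↦ B v.1 w.1 + B v.2 w.2`. -/
def sumB {K V : Type*} [CommRing K] [AddCommGroup V] [Module K V]
    (B : V →ₗ[K] V →ₗ[K] K) : (V × V) →ₗ[K] (V × V) →ₗ[K] K :=
  LinearMap.mk₂ K (fun v w => B v.1 w.1 + B v.2 w.2)
    (fun v v' w => by simp; ring)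
    (fun c v w => by simp; ring)
    (fun v w w' => by simp; ring)
    (fun c v w => by simp; ring)

/-- The symplectic form on `V × V` induced by a symmetric bilinear form `B` on `V`:
`(v,w) ↦ B v.2 w.1 - B v.1 w.2`. -/
def sympB {K V : Type*} [CommRing K] [AddCommGroup V] [Module K V]
    (B : V →ₗ[K] V →ₗ[K] K) : (V × V) →ₗ[K] (V × V) →ₗ[K] K :=
  LinearMap.mk₂ K (fun v w => B v.2 w.1 - B v.1 w.2)
    (fun v v' w => by simp; ring)
    (fun c v w => by simp; ring)
    (fun v w w' => by simp; ring)
    (fun c v w => by simp; ring)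

/-! ### Auxiliary lemmas -/

section Aux

variable {K V : Type*} [Field K] [AddCommGroup V] [Module K V]

lemma mem_ortho_iff {ξ : V →ₗ[K] V →ₗ[K] K} {H : Submodule K V} {v : V} :
    v ∈ ortho ξ H ↔ ∀ h ∈ H, ξ v h = 0 := by
  simp [ortho]

lemma ortho_eq_orthogonal {ξ : V →ₗ[K] V →ₗ[K] K} (hr : ξ.IsRefl) (H : Submodule K V) :
    ortho ξ H = LinearMap.BilinForm.orthogonal ξ H := by
  ext v
  rw [mem_ortho_iff, LinearMap.BilinForm.mem_orthogonal_iff]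
  exact ⟨fun h n hn => hr _ _ (h n hn), fun h n hn => hr _ _ (h n hn)⟩

lemma ortho_ortho [FiniteDimensional K V] {ξ : V →ₗ[K] V →ₗ[K] K}
    (hr : ξ.IsRefl) (hn : LinearMap.BilinForm.Nondegenerate ξ) (H : Submodule K V) :
    ortho ξ (ortho ξ H) = H := by
  rw [ortho_eq_orthogonal hr, ortho_eq_orthogonal hr,
    LinearMap.BilinForm.orthogonal_orthogonal hn hr]

lemma ortho_sup {ξ : V →ₗ[K] V →ₗ[K] K} (A B : Submodule K V) :
    ortho ξ (A ⊔ B) = ortho ξ A ⊓ ortho ξ B := by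
  ext v
  simp only [mem_ortho_iff, Submodule.mem_inf]
  constructor
  · exact fun h => ⟨fun a ha => h a (Submodule.mem_sup_left ha),
      fun b hb => h b (Submodule.mem_sup_right hb)⟩
  · rintro ⟨h1, h2⟩ x hx
    obtain ⟨a, ha, b, hb, rfl⟩ := Submodule.mem_sup.mp hx
    rw [map_add, h1 a ha, h2 b hb, add_zero]

lemma dotB_apply (p n : ℕ) (a b : Fin n → ZMod p) : dotB p n a b = ∑ j, a j * b j := rfl

lemma dotB_comm (p n : ℕ) (a b : Fin n → ZMod p) : dotB p n a b = dotB p n b a := by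
  simp [dotB_apply, mul_comm]

lemma dotB_refl (p n : ℕ) : (dotB p n).IsRefl := fun a b h => by rw [dotB_comm]; exact h

lemma dotB_nondeg (p n : ℕ) : LinearMap.BilinForm.Nondegenerate (dotB p n) := by
  refine (dotB_refl p n).nondegenerate_iff_separatingLeft.mpr ?_
  intro a h
  funext j
  have := h (Pi.single j 1)
  rw [dotB_apply] at this
  simpa [Pi.single_apply, mul_ite, Finset.sum_ite_eq'] using this

lemma sympB_apply {B : V →ₗ[K] V →ₗ[K] K} (v w : V × V) :
    sympB B v w = B v.2 w.1 - B v.1 w.2 := rfl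

lemma sympB_refl {B : V →ₗ[K] V →ₗ[K] K} (hB : ∀ a b, B a b = B b a) :
    (sympB B).IsRefl := by
  intro v w h
  rw [sympB_apply] at h ⊢
  rw [hB w.2 v.1, hB w.1 v.2]
  linear_combination -h

lemma sympB_nondeg {B : V →ₗ[K] V →ₗ[K] K}
    (hn : LinearMap.BilinForm.Nondegenerate B) :
    LinearMap.BilinForm.Nondegenerate (sympB B) := by
  refine ⟨fun v h => ?_, fun v h => ?_⟩
  · have h1 : v.1 = 0 := by
      apply hn.1
      intro d
      have := h (0, d)
      rw [sympB_apply] at this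
      simpa using this
    have h2 : v.2 = 0 := by
      apply hn.1
      intro c
      have := h (c, 0)
      rw [sympB_apply] at this
      simpa using this
    exact Prod.ext h1 h2
  · have h1 : v.1 = 0 := by
      apply hn.2
      intro d
      have := h (0, d)
      rw [sympB_apply] at this
      simpa using this
    have h2 : v.2 = 0 := by
      apply hn.2
      intro c
      have := h (c, 0)
      rw [sympB_apply] at this
      simpa using this
    exact Prod.ext h1 h2

/-! ### Goursat-type lemmas for products -/

lemma map_fst_prod (A B : Submodule K V) :
    (A.prod B).map (LinearMap.fst K V V) = A := by
  ext v
  constructor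
  · rintro ⟨⟨a, b⟩, ⟨ha, _⟩, rfl⟩; exact ha
  · intro hv; exact ⟨(v, 0), ⟨hv, B.zero_mem⟩, rfl⟩

lemma map_snd_prod (A B : Submodule K V) :
    (A.prod B).map (LinearMap.snd K V V) = B := by
  ext v
  constructor
  · rintro ⟨⟨a, b⟩, ⟨_, hb⟩, rfl⟩; exact hb
  · intro hv; exact ⟨(0, v), ⟨A.zero_mem, hv⟩, rfl⟩

lemma comap_inl_prod (A B : Submodule K V) :
    (A.prod B).comap (LinearMap.inl K V V) = A := by
  ext v
  simp [Submodule.mem_comap]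

lemma comap_inr_prod (A B : Submodule K V) :
    (A.prod B).comap (LinearMap.inr K V V) = B := by
  ext v
  simp [Submodule.mem_comap]

lemma isProd_iff_map (L : Submodule K (V × V)) :
    (∃ A B : Submodule K V, L = A.prod B) ↔
      L = (L.map (LinearMap.fst K V V)).prod (L.map (LinearMap.snd K V V)) := by
  constructor
  · rintro ⟨A, B, rfl⟩
    rw [map_fst_prod, map_snd_prod]
  · intro h; exact ⟨_, _, h⟩

lemma isProd_iff_comap (L : Submodule K (V × V)) :
    (∃ A B : Submodule K V, L = A.prod B) ↔
      L = (L.comap (LinearMap.inl K V V)).prod (L.comap (LinearMap.inr K V V)) := by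
  constructor
  · rintro ⟨A, B, rfl⟩
    rw [comap_inl_prod, comap_inr_prod]
  · intro h; exact ⟨_, _, h⟩

/-! ### Orthogonality and products -/

lemma ortho_sympB_prod {B : V →ₗ[K] V →ₗ[K] K} (A C : Submodule K V) :
    ortho (sympB B) (A.prod C) = (ortho B C).prod (ortho B A) := by
  ext v
  simp only [mem_ortho_iff, Submodule.mem_prod]
  constructor
  · intro h
    constructor
    · intro c hc
      have := h (0, c) ⟨A.zero_mem, hc⟩
      rw [sympB_apply] at this
      simpa using this
    · intro a ha
      have := h (a, 0) ⟨ha, C.zero_mem⟩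
      rw [sympB_apply] at this
      simpa using this
  · rintro ⟨h1, h2⟩ ⟨a, c⟩ ⟨ha, hc⟩
    rw [sympB_apply, h2 a ha, h1 c hc, sub_zero]

lemma comap_inl_ortho_sympB {B : V →ₗ[K] V →ₗ[K] K} (H : Submodule K (V × V)) :
    (ortho (sympB B) H).comap (LinearMap.inl K V V)
      = ortho B (H.map (LinearMap.snd K V V)) := by
  ext v
  simp only [Submodule.mem_comap, mem_ortho_iff]
  constructor
  · rintro h _ ⟨y, hy, rfl⟩
    have := h y hy
    rw [sympB_apply] at this
    simpa using this
  · intro h y hy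
    rw [LinearMap.inl_apply, sympB_apply]
    simpa using h y.2 ⟨y, hy, rfl⟩

lemma comap_inr_ortho_sympB {B : V →ₗ[K] V →ₗ[K] K} (H : Submodule K (V × V)) :
    (ortho (sympB B) H).comap (LinearMap.inr K V V)
      = ortho B (H.map (LinearMap.fst K V V)) := by
  ext v
  simp only [Submodule.mem_comap, mem_ortho_iff]
  constructor
  · rintro h _ ⟨y, hy, rfl⟩
    have := h y hy
    rw [sympB_apply] at this
    simpa using this
  · intro h y hy
    rw [LinearMap.inr_apply, sympB_apply]
    simpa using h y.1 ⟨y, hy, rfl⟩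

end Aux


/-- for `H ≤ G × G` with Goursat data `E_X, E_Z, N_X, N_Z`, the following
are equivalent: (1) `H ⊔ H^ω` is a direct product; (2) `H ⊓ H^ω` is a direct product;
(3) `H ⊔ H^ω = (E_X + N_Z^θ) × (E_Z + N_X^θ)`; (4) `H ⊓ H^ω = (N_X ∩ E_Z^θ) × (N_Z ∩ E_X^θ)`. -/
theorem stmt16 (p n : ℕ) [Fact p.Prime]
    (H : Submodule (ZMod p) ((Fin n → ZMod p) × (Fin n → ZMod p))) :
    ((∃ A B : Submodule (ZMod p) (Fin n → ZMod p),
        H ⊔ ortho (sympB (dotB p n)) H = A.prod B) ↔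
     (∃ A B : Submodule (ZMod p) (Fin n → ZMod p),
        H ⊓ ortho (sympB (dotB p n)) H = A.prod B)) ∧
    ((∃ A B : Submodule (ZMod p) (Fin n → ZMod p),
        H ⊔ ortho (sympB (dotB p n)) H = A.prod B) ↔
      H ⊔ ortho (sympB (dotB p n)) H
        = (H.map (LinearMap.fst (ZMod p) _ _)
            ⊔ ortho (dotB p n) (H.comap (LinearMap.inr (ZMod p) _ _))).prod
          (H.map (LinearMap.snd (ZMod p) _ _)
            ⊔ ortho (dotB p n) (H.comap (LinearMap.inl (ZMod p) _ _)))) ∧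
    ((∃ A B : Submodule (ZMod p) (Fin n → ZMod p),
        H ⊔ ortho (sympB (dotB p n)) H = A.prod B) ↔
      H ⊓ ortho (sympB (dotB p n)) H
        = (H.comap (LinearMap.inl (ZMod p) _ _)
            ⊓ ortho (dotB p n) (H.map (LinearMap.snd (ZMod p) _ _))).prod
          (H.comap (LinearMap.inr (ZMod p) _ _)
            ⊓ ortho (dotB p n) (H.map (LinearMap.fst (ZMod p) _ _)))) := by
  set θ := dotB p n with hθ
  set ω := sympB θ with hω
  set Hw := ortho ω H with hHw
  have hθr : θ.IsRefl := dotB_refl p n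
  have hθn : LinearMap.BilinForm.Nondegenerate θ := dotB_nondeg p n
  have hωr : ω.IsRefl := sympB_refl (dotB_comm p n)
  have hωn : LinearMap.BilinForm.Nondegenerate ω := sympB_nondeg hθn
  have hww : ortho ω Hw = H := ortho_ortho hωr hωn H
  -- the intersection is the symplectic-orthogonal of the sum
  have hK : ortho ω (H ⊔ Hw) = H ⊓ Hw := by
    rw [ortho_sup, hww, inf_comm]
  have hM : ortho ω (H ⊓ Hw) = H ⊔ Hw := by
    conv_lhs => rw [← hK]
    exact ortho_ortho hωr hωn _
  -- (1) ↔ (2)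
  have h12 : (∃ A B : Submodule (ZMod p) (Fin n → ZMod p), H ⊔ Hw = A.prod B) ↔
      (∃ A B : Submodule (ZMod p) (Fin n → ZMod p), H ⊓ Hw = A.prod B) := by
    constructor
    · rintro ⟨A, B, h⟩
      exact ⟨ortho θ B, ortho θ A, by rw [← hK, h, ortho_sympB_prod]⟩
    · rintro ⟨A, B, h⟩
      exact ⟨ortho θ B, ortho θ A, by rw [← hM, h, ortho_sympB_prod]⟩
  -- Goursat data of Hw
  have hmf : Hw.map (LinearMap.fst (ZMod p) _ _)
      = ortho θ (H.comap (LinearMap.inr (ZMod p) _ _)) := by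
    have e1 : H.comap (LinearMap.inr (ZMod p) _ _)
        = ortho θ (Hw.map (LinearMap.fst (ZMod p) _ _)) := by
      rw [← hww, comap_inr_ortho_sympB]
    rw [e1, ortho_ortho hθr hθn]
  have hms : Hw.map (LinearMap.snd (ZMod p) _ _)
      = ortho θ (H.comap (LinearMap.inl (ZMod p) _ _)) := by
    have e1 : H.comap (LinearMap.inl (ZMod p) _ _)
        = ortho θ (Hw.map (LinearMap.snd (ZMod p) _ _)) := by
      rw [← hww, comap_inl_ortho_sympB]
    rw [e1, ortho_ortho hθr hθn]
  -- (1) ↔ (3)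
  have h13 : (∃ A B : Submodule (ZMod p) (Fin n → ZMod p), H ⊔ Hw = A.prod B) ↔
      H ⊔ Hw = (H.map (LinearMap.fst (ZMod p) _ _)
            ⊔ ortho θ (H.comap (LinearMap.inr (ZMod p) _ _))).prod
          (H.map (LinearMap.snd (ZMod p) _ _)
            ⊔ ortho θ (H.comap (LinearMap.inl (ZMod p) _ _))) := by
    rw [isProd_iff_map, Submodule.map_sup, Submodule.map_sup, hmf, hms]
  -- (2) ↔ (4)
  have h24 : (∃ A B : Submodule (ZMod p) (Fin n → ZMod p), H ⊓ Hw = A.prod B) ↔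
      H ⊓ Hw = (H.comap (LinearMap.inl (ZMod p) _ _)
            ⊓ ortho θ (H.map (LinearMap.snd (ZMod p) _ _))).prod
          (H.comap (LinearMap.inr (ZMod p) _ _)
            ⊓ ortho θ (H.map (LinearMap.fst (ZMod p) _ _))) := by
    rw [isProd_iff_comap, Submodule.comap_inf, Submodule.comap_inf,
      hHw, comap_inl_ortho_sympB, comap_inr_ortho_sympB]
  exact ⟨h12, h13, h12.trans h24⟩
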